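/- For any f in the linear span of the Haar functions and any dyadic interval K, (f², h_K) = Σ_{I ⊊ K} (f,h_I)² h_K(I) + 2 (f,h_K) ⟨f⟩_K. -/

import Mathlib

open MeasureTheory Filter
open scoped ENNReal Classical Topology

noncomputable section

/-- The standard dyadic interval `[k·2^n, (k+1)·2^n)`. -/
def dyadic (n k : ℤ) : Set ℝ := Set.Ico ((k : ℝ) * 2 ^ n) (((k : ℝ) + 1) * 2 ^ n)

/-- The Haar function associated with `dyadic n k`:
`h_I = |I|^{-1/2} (1_{I_+} - 1_{I_-})`. -/
def haar (n k : ℤ) : ℝ → ℝ := fun x =>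
  (2 : ℝ) ^ (-(n : ℝ) / 2) *
    ((dyadic (n - 1) (2 * k + 1)).indicator 1 x - (dyadic (n - 1) (2 * k)).indicator 1 x)

/-- The constant value of `haar n k` on the dyadic subinterval `dyadic m j`
(its value at the left endpoint of that subinterval). -/
def haarVal (n k m j : ℤ) : ℝ := haar n k ((j : ℝ) * 2 ^ m)

/-- Haar coefficient `(f, h_I)`. -/
def innH (f : ℝ → ℝ) (n k : ℤ) : ℝ := ∫ x, f x * haar n k x

/-- Dyadic average `⟨f⟩_I = |I|⁻¹ ∫_I f`. -/
def avg (f : ℝ → ℝ) (n k : ℤ) : ℝ := (2 : ℝ) ^ (-n) * ∫ x in dyadic n k, f x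

/-- The linear span of the Haar functions. -/
def haarSpan : Submodule ℝ (ℝ → ℝ) :=
  Submodule.span ℝ (Set.range fun p : ℤ × ℤ => haar p.1 p.2)

end

open MeasureTheory Set

lemma two_zpow_pos (n : ℤ) : (0:ℝ) < 2 ^ n := zpow_pos (by norm_num) n

lemma dyadic_measurable (n k : ℤ) : MeasurableSet (dyadic n k) := measurableSet_Ico

lemma dyadic_lt (n k : ℤ) : (k:ℝ) * 2 ^ n < ((k:ℝ)+1) * 2 ^ n :=
  mul_lt_mul_of_pos_right (by linarith) (two_zpow_pos n)

lemma dyadic_nonempty (n k : ℤ) : (dyadic n k).Nonempty :=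
  Set.nonempty_Ico.2 (dyadic_lt n k)

lemma left_mem_dyadic (n k : ℤ) : (k:ℝ) * 2 ^ n ∈ dyadic n k :=
  ⟨le_refl _, dyadic_lt n k⟩

lemma volume_dyadic (n k : ℤ) : volume (dyadic n k) = ENNReal.ofReal ((2:ℝ) ^ n) := by
  rw [dyadic, Real.volume_Ico]; ring_nf

lemma half_left (n k : ℤ) : ((2*k : ℤ):ℝ) * 2 ^ (n-1) = (k:ℝ) * 2 ^ n := by
  rw [zpow_sub₀ (two_ne_zero)]; push_cast; ring

lemma half_right (n k : ℤ) : (((2*k+1 : ℤ):ℝ)+1) * 2 ^ (n-1) = ((k:ℝ)+1) * 2 ^ n := by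
  rw [zpow_sub₀ (two_ne_zero)]; push_cast; ring

lemma half_mid (n k : ℤ) : (((2*k : ℤ):ℝ)+1) * 2 ^ (n-1) = ((2*k+1 : ℤ):ℝ) * 2 ^ (n-1) := by
  push_cast; ring

lemma dyadic_halves (n k : ℤ) :
    dyadic (n-1) (2*k) ∪ dyadic (n-1) (2*k+1) = dyadic n k := by
  unfold dyadic
  rw [half_mid, Ico_union_Ico_eq_Ico, half_left, half_right]
  · rw [half_left]
    have := dyadic_lt (n-1) (2*k)
    rw [half_left] at this
    calc (k:ℝ) * 2^n ≤ ((2*k:ℤ):ℝ)*2^(n-1) + 2^(n-1) := by rw [half_left]; linarith [two_zpow_pos (n-1)]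
    _ = _ := by push_cast; ring
  · rw [half_right]
    have h1 := two_zpow_pos (n-1)
    have : ((2*k+1:ℤ):ℝ) * 2^(n-1) ≤ (((2*k+1:ℤ):ℝ)+1) * 2^(n-1) := by nlinarith
    linarith [half_right n k ▸ this]

lemma dyadic_halves_disjoint (n k : ℤ) :
    Disjoint (dyadic (n-1) (2*k)) (dyadic (n-1) (2*k+1)) := by
  unfold dyadic
  rw [half_mid]
  exact Set.Ico_disjoint_Ico_same

lemma dyadic_dichotomy {m n : ℤ} (h : m ≤ n) (j k : ℤ) :
    dyadic m j ⊆ dyadic n k ∨ Disjoint (dyadic m j) (dyadic n k) := by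
  set N : ℤ := 2 ^ (n-m).toNat with hN
  have hNr : ((N:ℤ):ℝ) * 2 ^ m = 2 ^ n := by
    rw [hN]; push_cast
    rw [← zpow_natCast (2:ℝ) (n-m).toNat, Int.toNat_of_nonneg (by omega),
      ← zpow_add₀ (two_ne_zero)]
    ring_nf
  by_cases h1 : k * N ≤ j ∧ j + 1 ≤ (k+1) * N
  · left
    apply Set.Ico_subset_Ico
    · calc (k:ℝ)*2^n = ((k*N:ℤ):ℝ)*2^m := by push_cast; rw [← hNr]; push_cast; ring
      _ ≤ (j:ℝ) * 2^m :=
          mul_le_mul_of_nonneg_right (by exact_mod_cast h1.1) (two_zpow_pos m).le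
    · calc ((j:ℝ)+1)*2^m = ((j+1:ℤ):ℝ)*2^m := by push_cast; ring
      _ ≤ (((k+1)*N:ℤ):ℝ)*2^m :=
          mul_le_mul_of_nonneg_right (by exact_mod_cast h1.2) (two_zpow_pos m).le
      _ = ((k:ℝ)+1)*2^n := by push_cast; rw [← hNr]; push_cast; ring
  · right
    rw [Set.disjoint_left]
    rintro x ⟨hx1, hx2⟩ ⟨hx3, hx4⟩
    rcases (by omega : j + 1 ≤ k * N ∨ (k+1) * N ≤ j) with h2 | h2
    · have : ((j+1:ℤ):ℝ) * 2^m ≤ ((k*N:ℤ):ℝ) * 2^m :=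
        mul_le_mul_of_nonneg_right (by exact_mod_cast h2) (two_zpow_pos m).le
      have e1 : ((k*N:ℤ):ℝ) * 2^m = (k:ℝ)*2^n := by push_cast; rw [← hNr]; push_cast; ring
      push_cast at this e1; linarith
    · have : (((k+1)*N:ℤ):ℝ) * 2^m ≤ ((j:ℤ):ℝ) * 2^m :=
        mul_le_mul_of_nonneg_right (by exact_mod_cast h2) (two_zpow_pos m).le
      have e1 : (((k+1)*N:ℤ):ℝ) * 2^m = ((k:ℝ)+1)*2^n := by push_cast; rw [← hNr]; push_cast; ring
      push_cast at this e1; linarith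

lemma dyadic_subset_le {m n j k : ℤ} (h : dyadic m j ⊆ dyadic n k) : m ≤ n := by
  rw [dyadic, dyadic, Set.Ico_subset_Ico_iff (dyadic_lt m j)] at h
  have e1 : ((j:ℝ)+1)*2^m = (j:ℝ)*2^m + 2^m := by ring
  have e2 : ((k:ℝ)+1)*2^n = (k:ℝ)*2^n + 2^n := by ring
  have : (2:ℝ)^m ≤ 2^n := by linarith [h.1, h.2]
  exact (zpow_le_zpow_iff_right₀ one_lt_two).1 this

lemma dyadic_eq_iff {m n j k : ℤ} : dyadic m j = dyadic n k ↔ m = n ∧ j = k := by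
  constructor
  · intro h
    have hmn : m = n := le_antisymm (dyadic_subset_le h.le) (dyadic_subset_le h.ge)
    subst hmn
    have h1 := (Set.Ico_subset_Ico_iff (dyadic_lt m j)).1 h.le
    have h2 := (Set.Ico_subset_Ico_iff (dyadic_lt m k)).1 h.ge
    have : (j:ℝ) = k := by
      have := two_zpow_pos m
      have : (j:ℝ)*2^m = (k:ℝ)*2^m := le_antisymm (by linarith [h2.1]) (by linarith [h1.1])
      exact mul_right_cancel₀ (two_zpow_pos m).ne' this
    exact ⟨rfl, by exact_mod_cast this⟩
  · rintro ⟨rfl, rfl⟩; rfl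

lemma dyadic_ssubset_lt {m n j k : ℤ} (h : dyadic m j ⊂ dyadic n k) : m < n := by
  have hle := dyadic_subset_le h.subset
  rcases lt_or_eq_of_le hle with h' | h'
  · exact h'
  · exfalso
    subst h'
    have h1 := (Set.Ico_subset_Ico_iff (dyadic_lt m j)).1 h.subset
    have hjk : (j:ℝ) = k := by
      have hp := two_zpow_pos m
      have e1 : ((j:ℝ)+1)*2^m = (j:ℝ)*2^m + 2^m := by ring
      have e2 : ((k:ℝ)+1)*2^m = (k:ℝ)*2^m + 2^m := by ring
      have : (j:ℝ)*2^m = (k:ℝ)*2^m := le_antisymm (by linarith [h1.2]) h1.1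
      exact mul_right_cancel₀ hp.ne' this
    have : j = k := by exact_mod_cast hjk
    subst this
    exact h.ne rfl

lemma ssubset_half {m n j k : ℤ} (h : dyadic m j ⊂ dyadic n k) :
    dyadic m j ⊆ dyadic (n-1) (2*k) ∨ dyadic m j ⊆ dyadic (n-1) (2*k+1) := by
  have hm : m ≤ n - 1 := by have := dyadic_ssubset_lt h; omega
  rcases dyadic_dichotomy hm j (2*k) with h1 | h1
  · exact Or.inl h1
  rcases dyadic_dichotomy hm j (2*k+1) with h2 | h2
  · exact Or.inr h2
  exfalso
  have hd : Disjoint (dyadic m j) (dyadic n k) := by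
    have := Disjoint.union_right h1 h2
    rwa [dyadic_halves] at this
  obtain ⟨x, hx⟩ := dyadic_nonempty m j
  exact Set.disjoint_left.1 hd hx (h.subset hx)

lemma haar_apply_neg {n k : ℤ} {x : ℝ} (hx : x ∈ dyadic (n-1) (2*k)) :
    haar n k x = -(2 ^ (-(n:ℝ)/2)) := by
  have hx' : x ∉ dyadic (n-1) (2*k+1) := fun h => Set.disjoint_left.1 (dyadic_halves_disjoint n k) hx h
  simp [haar, Set.indicator_of_mem hx, Set.indicator_of_notMem hx']

lemma haar_apply_pos {n k : ℤ} {x : ℝ} (hx : x ∈ dyadic (n-1) (2*k+1)) :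
    haar n k x = 2 ^ (-(n:ℝ)/2) := by
  have hx' : x ∉ dyadic (n-1) (2*k) := fun h => Set.disjoint_left.1 (dyadic_halves_disjoint n k) h hx
  simp [haar, Set.indicator_of_mem hx, Set.indicator_of_notMem hx']

lemma haar_eq_zero {n k : ℤ} {x : ℝ} (hx : x ∉ dyadic n k) : haar n k x = 0 := by
  rw [← dyadic_halves] at hx
  simp only [Set.mem_union, not_or] at hx
  simp [haar, Set.indicator_of_notMem hx.1, Set.indicator_of_notMem hx.2]

lemma haar_const {m j n k : ℤ} (h : dyadic m j ⊂ dyadic n k) {x : ℝ} (hx : x ∈ dyadic m j) :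
    haar n k x = haarVal n k m j := by
  have hl := left_mem_dyadic m j
  rcases ssubset_half h with hs | hs
  · rw [haar_apply_neg (hs hx), haarVal, haar_apply_neg (hs hl)]
  · rw [haar_apply_pos (hs hx), haarVal, haar_apply_pos (hs hl)]

lemma haar_abs_le (n k : ℤ) (x : ℝ) : |haar n k x| ≤ 2 ^ (-(n:ℝ)/2) := by
  by_cases hx : x ∈ dyadic n k
  · rw [← dyadic_halves] at hx
    rcases hx with hx | hx
    · rw [haar_apply_neg hx, abs_neg, abs_of_nonneg (by positivity)]
    · rw [haar_apply_pos hx, abs_of_nonneg (by positivity)]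
  · rw [haar_eq_zero hx]; simp; positivity

lemma haar_measurable (n k : ℤ) : Measurable (haar n k) := by
  apply Measurable.const_mul
  exact ((measurable_const.indicator (dyadic_measurable _ _)).sub
    (measurable_const.indicator (dyadic_measurable _ _)))

lemma indicator_one_integrable (n k : ℤ) :
    Integrable ((dyadic n k).indicator (1 : ℝ → ℝ)) := by
  rw [integrable_indicator_iff (dyadic_measurable n k)]
  exact integrableOn_const (by rw [volume_dyadic]; exact ENNReal.ofReal_ne_top)

lemma haar_integrable (n k : ℤ) : Integrable (haar n k) := by
  apply Integrable.const_mul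
  exact (indicator_one_integrable _ _).sub (indicator_one_integrable _ _)

lemma dyadic_cases (m j n k : ℤ) :
    dyadic m j ⊂ dyadic n k ∨ dyadic m j = dyadic n k ∨ dyadic n k ⊂ dyadic m j ∨
      Disjoint (dyadic m j) (dyadic n k) := by
  rcases le_total m n with h | h
  · rcases dyadic_dichotomy h j k with hs | hd
    · rcases eq_or_ne (dyadic m j) (dyadic n k) with he | hne
      · exact Or.inr (Or.inl he)
      · exact Or.inl (ssubset_of_subset_of_ne hs hne)
    · exact Or.inr (Or.inr (Or.inr hd))
  · rcases dyadic_dichotomy h k j with hs | hd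
    · rcases eq_or_ne (dyadic m j) (dyadic n k) with he | hne
      · exact Or.inr (Or.inl he)
      · exact Or.inr (Or.inr (Or.inl (ssubset_of_subset_of_ne hs (Ne.symm hne))))
    · exact Or.inr (Or.inr (Or.inr hd.symm))

lemma integral_indicator_one (n k : ℤ) :
    ∫ x, (dyadic n k).indicator (1 : ℝ → ℝ) x = (2:ℝ)^n := by
  rw [integral_indicator (dyadic_measurable n k)]
  simp [setIntegral_const, Measure.real, volume_dyadic, ENNReal.toReal_ofReal (two_zpow_pos n).le]

lemma integral_haar (n k : ℤ) : ∫ x, haar n k x = 0 := by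
  unfold haar
  rw [integral_const_mul, integral_sub (indicator_one_integrable _ _) (indicator_one_integrable _ _),
    _root_.integral_indicator_one, _root_.integral_indicator_one]
  simp

lemma haar_val_sq (n : ℤ) : ((2:ℝ) ^ (-(n:ℝ)/2))^2 = (2:ℝ)^(-n) := by
  rw [← Real.rpow_natCast ((2:ℝ) ^ (-(n:ℝ)/2)) 2, ← Real.rpow_mul (by norm_num)]
  rw [show (-(n:ℝ)/2) * (2:ℕ) = ((-n:ℤ):ℝ) by push_cast; ring, Real.rpow_intCast]

lemma haar_sq (n k : ℤ) (x : ℝ) :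
    haar n k x ^ 2 = (2:ℝ)^(-n) * (dyadic n k).indicator 1 x := by
  by_cases hx : x ∈ dyadic n k
  · rw [Set.indicator_of_mem hx, Pi.one_apply, mul_one]
    have hx' := hx
    rw [← dyadic_halves] at hx'
    rcases hx' with h | h
    · rw [haar_apply_neg h, neg_pow, haar_val_sq]; ring_nf
    · rw [haar_apply_pos h, haar_val_sq]
  · rw [Set.indicator_of_notMem hx, haar_eq_zero hx, mul_zero]; ring

-- set integral of haar over dyadic set

lemma setIntegral_haar_of_superset {m j n k : ℤ} (h : dyadic n k ⊆ dyadic m j) :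
    ∫ x in dyadic m j, haar n k x = 0 := by
  rw [setIntegral_eq_integral_of_forall_compl_eq_zero
    (fun x hx => haar_eq_zero (fun hm => hx (h hm)))]
  exact integral_haar n k

lemma setIntegral_haar_of_disjoint {m j n k : ℤ} (h : Disjoint (dyadic m j) (dyadic n k)) :
    ∫ x in dyadic m j, haar n k x = 0 :=
  setIntegral_eq_zero_of_forall_eq_zero
    (fun x hx => haar_eq_zero (fun hm => Set.disjoint_left.1 h hx hm))

lemma setIntegral_haar_of_ssubset {m j n k : ℤ} (h : dyadic m j ⊂ dyadic n k) :
    ∫ x in dyadic m j, haar n k x = (2:ℝ)^m * haarVal n k m j := by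
  rw [setIntegral_congr_fun (dyadic_measurable m j) (g := fun _ => haarVal n k m j)
    (fun x hx => haar_const h hx)]
  rw [setIntegral_const, Measure.real, volume_dyadic, ENNReal.toReal_ofReal (two_zpow_pos m).le,
    smul_eq_mul]

lemma avg_haar (m j n k : ℤ) :
    avg (haar m j) n k = if dyadic n k ⊂ dyadic m j then haarVal m j n k else 0 := by
  unfold avg
  rcases dyadic_cases n k m j with h | h | h | h
  · rw [if_pos h, setIntegral_haar_of_ssubset h]
    rw [← mul_assoc, ← zpow_add₀ (two_ne_zero : (2:ℝ) ≠ 0)]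
    simp
  · rw [if_neg (show ¬dyadic n k ⊂ dyadic m j by rw [h]; exact fun hc => hc.ne rfl),
      setIntegral_haar_of_superset h.ge, mul_zero]
  · rw [if_neg (fun hc => hc.not_subset h.subset), setIntegral_haar_of_superset h.subset, mul_zero]
  · obtain ⟨x, hx⟩ := dyadic_nonempty n k
    rw [if_neg (fun hc => (Set.disjoint_left.1 h hx) (hc.subset hx)),
      setIntegral_haar_of_disjoint h, mul_zero]

lemma haar_mul_haar_of_ssubset {a b c d : ℤ} (h : dyadic a b ⊂ dyadic c d) (x : ℝ) :
    haar a b x * haar c d x = haarVal c d a b * haar a b x := by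
  by_cases hx : x ∈ dyadic a b
  · rw [haar_const h hx]; ring
  · rw [haar_eq_zero hx]; ring

lemma haar_mul_haar_of_disjoint {a b c d : ℤ} (h : Disjoint (dyadic a b) (dyadic c d)) (x : ℝ) :
    haar a b x * haar c d x = 0 := by
  by_cases hx : x ∈ dyadic a b
  · rw [haar_eq_zero (Set.disjoint_left.1 h hx), mul_zero]
  · rw [haar_eq_zero hx, zero_mul]

lemma integrable_haar_mul (a b c d : ℤ) : Integrable (fun x => haar a b x * haar c d x) :=
  (haar_integrable c d).bdd_mul (haar_measurable a b).aestronglyMeasurable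
    (c := 2 ^ (-(a:ℝ)/2)) (Filter.Eventually.of_forall fun x => by simpa [Real.norm_eq_abs] using haar_abs_le a b x)

lemma integrable_haar_mul3 (a b c d n k : ℤ) :
    Integrable (fun x => haar a b x * haar c d x * haar n k x) :=
  (haar_integrable n k).bdd_mul
    ((haar_measurable a b).mul (haar_measurable c d)).aestronglyMeasurable
    (c := 2 ^ (-(a:ℝ)/2) * 2 ^ (-(c:ℝ)/2)) (Filter.Eventually.of_forall fun x => by
      rw [Real.norm_eq_abs, abs_mul]
      exact mul_le_mul (haar_abs_le a b x) (haar_abs_le c d x) (abs_nonneg _) (by positivity))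

lemma integral_haar_sq (a b : ℤ) : ∫ x, haar a b x * haar a b x = 1 := by
  have e : ∀ x, haar a b x * haar a b x = (2:ℝ)^(-a) * (dyadic a b).indicator 1 x :=
    fun x => by rw [← pow_two, haar_sq]
  rw [funext e, integral_const_mul, _root_.integral_indicator_one, ← zpow_add₀ (two_ne_zero : (2:ℝ) ≠ 0)]
  simp

lemma integral_haar_mul (q r : ℤ × ℤ) :
    ∫ x, haar q.1 q.2 x * haar r.1 r.2 x = if q = r then 1 else 0 := by
  rcases dyadic_cases q.1 q.2 r.1 r.2 with h | h | h | h
  · rw [if_neg (fun he => h.ne (by rw [he])), funext (haar_mul_haar_of_ssubset h),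
      integral_const_mul, integral_haar, mul_zero]
  · have hqr : q = r := by
      have := dyadic_eq_iff.1 h
      exact Prod.ext this.1 this.2
    subst hqr
    rw [if_pos rfl, integral_haar_sq]
  · have e : ∀ x, haar q.1 q.2 x * haar r.1 r.2 x = haarVal q.1 q.2 r.1 r.2 * haar r.1 r.2 x :=
      fun x => by rw [← haar_mul_haar_of_ssubset h, mul_comm]
    rw [if_neg (fun he => h.ne (by rw [he])), funext e, integral_const_mul, integral_haar, mul_zero]
  · have hne : q ≠ r := by
      intro he
      obtain ⟨x, hx⟩ := dyadic_nonempty q.1 q.2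
      exact Set.disjoint_left.1 h hx (he ▸ hx)
    rw [if_neg hne, funext (haar_mul_haar_of_disjoint h), integral_zero]

lemma ne_of_dyadic_ssubset {q r : ℤ × ℤ} (h : dyadic q.1 q.2 ⊂ dyadic r.1 r.2) : q ≠ r :=
  fun he => h.ne (by rw [he])

lemma pair_eq_of_dyadic_eq {q : ℤ × ℤ} {n k : ℤ} (h : dyadic q.1 q.2 = dyadic n k) : q = (n, k) :=
  Prod.ext (dyadic_eq_iff.1 h).1 (dyadic_eq_iff.1 h).2

lemma keyT_of_ssubset (n k : ℤ) (q r : ℤ × ℤ) (h : dyadic q.1 q.2 ⊂ dyadic r.1 r.2) :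
    ∫ x, haar q.1 q.2 x * haar r.1 r.2 x * haar n k x =
      (if q = (n,k) then avg (haar r.1 r.2) n k else 0) +
      (if r = (n,k) then avg (haar q.1 q.2) n k else 0) := by
  have e : ∀ x, haar q.1 q.2 x * haar r.1 r.2 x * haar n k x
      = haarVal r.1 r.2 q.1 q.2 * (haar q.1 q.2 x * haar n k x) := by
    intro x; rw [haar_mul_haar_of_ssubset h]; ring
  have him : ∫ x, haar q.1 q.2 x * haar n k x = if q = (n, k) then 1 else 0 :=
    integral_haar_mul q (n, k)
  rw [funext e, integral_const_mul, him]
  by_cases hq : q = (n, k)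
  · subst hq
    have h' : dyadic n k ⊂ dyadic r.1 r.2 := h
    have hr : r ≠ ((n:ℤ), k) := fun he => h'.ne (by rw [he])
    rw [if_pos rfl, if_pos rfl, if_neg hr, add_zero, avg_haar, if_pos h', mul_one]
  · have hr : r = (n,k) → avg (haar q.1 q.2) n k = 0 := by
      intro he
      subst he
      rw [avg_haar, if_neg]
      exact fun hc => ((h.trans hc).ne rfl)
    rw [if_neg hq, if_neg hq, mul_zero, zero_add]
    by_cases hr' : r = (n,k)
    · rw [if_pos hr', hr hr']
    · rw [if_neg hr']

lemma keyT (n k : ℤ) (q r : ℤ × ℤ) :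
    ∫ x, haar q.1 q.2 x * haar r.1 r.2 x * haar n k x =
      (if q = r ∧ dyadic q.1 q.2 ⊂ dyadic n k then haarVal n k q.1 q.2 else 0)
      + ((if q = (n,k) then avg (haar r.1 r.2) n k else 0)
      + (if r = (n,k) then avg (haar q.1 q.2) n k else 0)) := by
  rcases dyadic_cases q.1 q.2 r.1 r.2 with h | h | h | h
  · rw [if_neg (fun hc => (ne_of_dyadic_ssubset h) hc.1), zero_add, keyT_of_ssubset n k q r h]
  · have hqr : q = r := (pair_eq_of_dyadic_eq h).trans (Prod.mk.eta)
    subst hqr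
    have e : ∀ x, haar q.1 q.2 x * haar q.1 q.2 x * haar n k x
        = (2:ℝ)^(-q.1) * ((dyadic q.1 q.2).indicator (haar n k) x) := by
      intro x
      by_cases hx : x ∈ dyadic q.1 q.2
      · have hsq := haar_sq q.1 q.2 x
        rw [Set.indicator_of_mem hx, Pi.one_apply, mul_one] at hsq
        rw [Set.indicator_of_mem hx, ← hsq, pow_two]
      · rw [Set.indicator_of_notMem hx, haar_eq_zero hx]; ring
    rw [funext e, integral_const_mul, integral_indicator (dyadic_measurable q.1 q.2)]
    rcases dyadic_cases q.1 q.2 n k with h2 | h2 | h2 | h2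
    · have hq : q ≠ (n,k) := fun he => h2.ne (by rw [he])
      rw [setIntegral_haar_of_ssubset h2, if_pos ⟨rfl, h2⟩, if_neg hq,
        ← mul_assoc, ← zpow_add₀ (two_ne_zero : (2:ℝ) ≠ 0)]
      simp
    · have hq : q = (n,k) := pair_eq_of_dyadic_eq h2
      subst hq
      have havg : avg (haar ((n,k) : ℤ × ℤ).1 ((n,k) : ℤ × ℤ).2) n k = 0 := by
        rw [avg_haar, if_neg]
        exact fun hc => hc.ne h2.symm
      rw [setIntegral_haar_of_superset h2.ge, mul_zero, if_neg (fun hc => hc.2.ne h2),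
        if_pos rfl, havg]
      norm_num
    · have hq : q ≠ (n,k) := fun he => h2.ne (by rw [he])
      rw [setIntegral_haar_of_superset h2.subset, mul_zero,
        if_neg (fun hc => hc.2.not_subset h2.subset), if_neg hq]
      norm_num
    · obtain ⟨x, hx⟩ := dyadic_nonempty q.1 q.2
      have hq : q ≠ (n,k) := by
        intro he
        apply Set.disjoint_left.1 h2 hx
        rw [he] at hx
        exact hx
      rw [setIntegral_haar_of_disjoint h2, mul_zero,
        if_neg (fun hc => Set.disjoint_left.1 h2 hx (hc.2.subset hx)), if_neg hq]
      norm_num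
  · have hqr : q ≠ r := fun he => (ne_of_dyadic_ssubset h) he.symm
    have e : ∀ x, haar q.1 q.2 x * haar r.1 r.2 x * haar n k x
        = haar r.1 r.2 x * haar q.1 q.2 x * haar n k x := fun x => by ring
    have h0 : (if q = r ∧ dyadic q.1 q.2 ⊂ dyadic n k then haarVal n k q.1 q.2 else 0) = 0 :=
      if_neg (fun hc => hqr hc.1)
    rw [funext e, keyT_of_ssubset n k r q h, h0, zero_add]
    ring
  · have hqr : q ≠ r := by
      intro he
      obtain ⟨x, hx⟩ := dyadic_nonempty q.1 q.2
      apply Set.disjoint_left.1 h hx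
      rw [← he]
      exact hx
    have e : ∀ x, haar q.1 q.2 x * haar r.1 r.2 x * haar n k x = 0 := by
      intro x; rw [haar_mul_haar_of_disjoint h, zero_mul]
    rw [funext e, integral_zero, if_neg (fun hc => hqr hc.1), zero_add]
    by_cases hq : q = (n,k)
    · subst hq
      have hr : r ≠ ((n:ℤ),k) := fun he => hqr he.symm
      obtain ⟨x, hx⟩ := dyadic_nonempty n k
      have havg : avg (haar r.1 r.2) n k = 0 := by
        rw [avg_haar, if_neg]
        exact fun hc => Set.disjoint_left.1 h hx (hc.subset hx)
      rw [if_pos rfl, if_neg hr, add_zero, havg]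
    · rw [if_neg hq, zero_add]
      by_cases hr : r = (n,k)
      · subst hr
        obtain ⟨x, hx⟩ := dyadic_nonempty n k
        have havg : avg (haar q.1 q.2) n k = 0 := by
          rw [avg_haar, if_neg]
          exact fun hc => Set.disjoint_left.1 h (hc.subset hx) hx
        rw [if_pos rfl, havg]
      · rw [if_neg hr]

theorem haar_coeff_square (f : ℝ → ℝ) (hf : f ∈ haarSpan) (n k : ℤ) :
    innH (fun x => f x ^ 2) n k =
      (∑' p : ℤ × ℤ, if dyadic p.1 p.2 ⊂ dyadic n k then
        innH f p.1 p.2 ^ 2 * haarVal n k p.1 p.2 else 0)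
      + 2 * innH f n k * avg f n k := by
  rw [haarSpan] at hf
  obtain ⟨c, hc⟩ := Finsupp.mem_span_range_iff_exists_finsupp.1 hf
  set s := c.support with hs
  have hfx : ∀ x, f x = ∑ q ∈ s, c q * haar q.1 q.2 x := by
    intro x
    rw [← hc]
    simp [hs, Finsupp.sum, Finset.sum_apply, Pi.smul_apply, smul_eq_mul]
  have hinn : ∀ p : ℤ × ℤ, innH f p.1 p.2 = c p := by
    intro p
    have e : ∀ x, f x * haar p.1 p.2 x
        = ∑ q ∈ s, c q * (haar q.1 q.2 x * haar p.1 p.2 x) := by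
      intro x
      rw [hfx x, Finset.sum_mul]
      exact Finset.sum_congr rfl fun q _ => by ring
    rw [innH, funext e, integral_finset_sum _
      (fun q _ => (integrable_haar_mul q.1 q.2 p.1 p.2).const_mul (c q))]
    have e2 : ∀ q ∈ s, (∫ x, c q * (haar q.1 q.2 x * haar p.1 p.2 x))
        = c q * (if q = p then 1 else 0) := fun q _ => by
      rw [integral_const_mul, integral_haar_mul q p]
    rw [Finset.sum_congr rfl e2]
    simp only [mul_ite, mul_one, mul_zero]
    rw [Finset.sum_ite_eq' s p c]
    by_cases hp : p ∈ s
    · rw [if_pos hp]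
    · rw [if_neg hp, Finsupp.notMem_support_iff.1 hp]
  have hinnK : innH f n k = c (n, k) := hinn (n, k)
  have havg : avg f n k = ∑ q ∈ s, c q * avg (haar q.1 q.2) n k := by
    simp only [avg]
    have e1 : ∫ x in dyadic n k, f x
        = ∑ q ∈ s, c q * ∫ x in dyadic n k, haar q.1 q.2 x := by
      calc ∫ x in dyadic n k, f x = ∫ x in dyadic n k, ∑ q ∈ s, c q * haar q.1 q.2 x :=
            integral_congr_ae (Filter.Eventually.of_forall fun x => hfx x)
        _ = ∑ q ∈ s, ∫ x in dyadic n k, c q * haar q.1 q.2 x :=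
            integral_finset_sum s (fun q _ => ((haar_integrable q.1 q.2).restrict).const_mul (c q))
        _ = ∑ q ∈ s, c q * ∫ x in dyadic n k, haar q.1 q.2 x :=
            Finset.sum_congr rfl fun q _ => integral_const_mul _ _
    rw [e1, Finset.mul_sum]
    exact Finset.sum_congr rfl fun q _ => by ring
  have htsum : (∑' p : ℤ × ℤ, if dyadic p.1 p.2 ⊂ dyadic n k then
        innH f p.1 p.2 ^ 2 * haarVal n k p.1 p.2 else 0)
      = ∑ p ∈ s, (if dyadic p.1 p.2 ⊂ dyadic n k then c p ^ 2 * haarVal n k p.1 p.2 else 0) := by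
    rw [tsum_eq_sum (s := s) (fun p hp => by rw [hinn p, Finsupp.notMem_support_iff.1 hp]; simp)]
    exact Finset.sum_congr rfl fun p _ => by rw [hinn p]
  have hlhs : innH (fun x => f x ^ 2) n k
      = ∑ q ∈ s, ∑ r ∈ s,
          c q * c r * ∫ x, haar q.1 q.2 x * haar r.1 r.2 x * haar n k x := by
    have e : ∀ x, f x ^ 2 * haar n k x
        = ∑ q ∈ s, ∑ r ∈ s, c q * c r * (haar q.1 q.2 x * haar r.1 r.2 x * haar n k x) := by
      intro x
      rw [pow_two, hfx x, Finset.sum_mul_sum, Finset.sum_mul]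
      refine Finset.sum_congr rfl fun q _ => ?_
      rw [Finset.sum_mul]
      exact Finset.sum_congr rfl fun r _ => by ring
    rw [innH, funext e, integral_finset_sum _ (fun q _ =>
      integrable_finset_sum _ (fun r _ => (integrable_haar_mul3 q.1 q.2 r.1 r.2 n k).const_mul _))]
    refine Finset.sum_congr rfl fun q _ => ?_
    rw [integral_finset_sum _ (fun r _ => (integrable_haar_mul3 q.1 q.2 r.1 r.2 n k).const_mul _)]
    exact Finset.sum_congr rfl fun r _ => integral_const_mul _ _
  have hsplit : ∀ q ∈ s, (∑ r ∈ s,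
        c q * c r * ∫ x, haar q.1 q.2 x * haar r.1 r.2 x * haar n k x)
      = (∑ r ∈ s, c q * c r *
          (if q = r ∧ dyadic q.1 q.2 ⊂ dyadic n k then haarVal n k q.1 q.2 else 0))
        + ((∑ r ∈ s, c q * c r * (if q = (n,k) then avg (haar r.1 r.2) n k else 0))
        + (∑ r ∈ s, c q * c r * (if r = (n,k) then avg (haar q.1 q.2) n k else 0))) := by
    intro q _
    rw [← Finset.sum_add_distrib, ← Finset.sum_add_distrib]
    exact Finset.sum_congr rfl fun r _ => by rw [keyT n k q r]; ring
  rw [hlhs, Finset.sum_congr rfl hsplit, Finset.sum_add_distrib, Finset.sum_add_distrib]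
  have hA : (∑ q ∈ s, ∑ r ∈ s, c q * c r *
        (if q = r ∧ dyadic q.1 q.2 ⊂ dyadic n k then haarVal n k q.1 q.2 else 0))
      = ∑ p ∈ s, (if dyadic p.1 p.2 ⊂ dyadic n k then c p ^ 2 * haarVal n k p.1 p.2 else 0) := by
    refine Finset.sum_congr rfl fun q hq => ?_
    have e : ∀ r, c q * c r *
          (if q = r ∧ dyadic q.1 q.2 ⊂ dyadic n k then haarVal n k q.1 q.2 else 0)
        = if r = q then
            (if dyadic q.1 q.2 ⊂ dyadic n k then c q ^ 2 * haarVal n k q.1 q.2 else 0) else 0 := by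
      intro r
      by_cases h1 : q = r
      · subst h1
        by_cases h2 : dyadic q.1 q.2 ⊂ dyadic n k
        · rw [if_pos ⟨rfl, h2⟩, if_pos rfl, if_pos h2]; ring
        · rw [if_neg (fun hc' => h2 hc'.2), mul_zero, if_pos rfl, if_neg h2]
      · rw [if_neg (fun hc' => h1 hc'.1), mul_zero, if_neg (fun hr => h1 hr.symm)]
    rw [Finset.sum_congr rfl (fun r _ => e r), Finset.sum_ite_eq' s q _, if_pos hq]
  have hB : (∑ q ∈ s, ∑ r ∈ s, c q * c r *
        (if q = (n,k) then avg (haar r.1 r.2) n k else 0))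
      = c (n,k) * ∑ r ∈ s, c r * avg (haar r.1 r.2) n k := by
    have e : ∀ q, (∑ r ∈ s, c q * c r * (if q = (n,k) then avg (haar r.1 r.2) n k else 0))
        = if q = (n,k) then c q * ∑ r ∈ s, c r * avg (haar r.1 r.2) n k else 0 := by
      intro q
      by_cases h1 : q = (n,k)
      · rw [if_pos h1, Finset.mul_sum]
        exact Finset.sum_congr rfl fun r _ => by rw [if_pos h1]; ring
      · rw [if_neg h1]
        exact Finset.sum_eq_zero fun r _ => by rw [if_neg h1, mul_zero]
    rw [Finset.sum_congr rfl fun q _ => e q, Finset.sum_ite_eq' s (n,k) _]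
    by_cases hs' : ((n,k) : ℤ × ℤ) ∈ s
    · rw [if_pos hs']
    · rw [if_neg hs', Finsupp.notMem_support_iff.1 hs', zero_mul]
  have hC : (∑ q ∈ s, ∑ r ∈ s, c q * c r *
        (if r = (n,k) then avg (haar q.1 q.2) n k else 0))
      = c (n,k) * ∑ q ∈ s, c q * avg (haar q.1 q.2) n k := by
    have e : ∀ q, (∑ r ∈ s, c q * c r * (if r = (n,k) then avg (haar q.1 q.2) n k else 0))
        = if ((n,k) : ℤ × ℤ) ∈ s then c q * c (n,k) * avg (haar q.1 q.2) n k else 0 := by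
      intro q
      have e2 : ∀ r, c q * c r * (if r = (n,k) then avg (haar q.1 q.2) n k else 0)
          = if r = (n,k) then c q * c r * avg (haar q.1 q.2) n k else 0 := fun r => by
        by_cases h1 : r = (n,k) <;> simp [h1]
      rw [Finset.sum_congr rfl fun r _ => e2 r, Finset.sum_ite_eq' s ((n,k) : ℤ × ℤ) _]
    rw [Finset.sum_congr rfl fun q _ => e q]
    by_cases hs' : ((n,k) : ℤ × ℤ) ∈ s
    · simp only [if_pos hs']
      rw [Finset.mul_sum]
      exact Finset.sum_congr rfl fun q _ => by ring
    · simp only [if_neg hs']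
      rw [Finsupp.notMem_support_iff.1 hs']
      simp
  rw [hA, hB, hC, htsum, hinnK, havg]
  ring
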